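/- arXiv:math/0702297 — 3 statements merged into one kernel-verified Lean document; each statement's English description precedes it below -/
import Mathlib

section
/- Fix λ > 0 and define f₊ : ℝ → ℝ by f₊(ρ) = 1 + λ e^{−3ρ}. Then for every ρ > 0: (i) the exact identity f₊''(ρ) + 2 (cosh ρ / sinh ρ) f₊'(ρ) − (3/4) f₊(ρ) ((f₊(ρ))⁴ − 1) = −6 λ ((cosh ρ / sinh ρ) − 1) e^{−3ρ} − (3/4)(10 x² + 10 x³ + 5 x⁴ + x⁵) holds, where x = λ e^{−3ρ}; (ii) consequently this quantity is strictly negative for all ρ > 0. -/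
open Real

lemma deriv_barrier (l : ℝ) :
    deriv (fun r : ℝ => 1 + l * Real.exp (-3 * r)) = fun r => -3 * l * Real.exp (-3 * r) := by
  funext r
  have h : HasDerivAt (fun r : ℝ => 1 + l * Real.exp (-3 * r))
      (-3 * l * Real.exp (-3 * r)) r := by
    have : HasDerivAt (fun x => 1 + l * rexp (-3 * id x)) (l * (rexp (-3 * r) * (-3 * 1))) r := ((hasDerivAt_id r).const_mul (-3 : ℝ)).exp.const_mul l |>.const_add 1
    convert this using 1
    simp only [id_eq]
    ring
  exact h.deriv

lemma deriv2_barrier (l : ℝ) :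
    deriv (fun r : ℝ => -3 * l * Real.exp (-3 * r)) = fun r => 9 * l * Real.exp (-3 * r) := by
  funext r
  have h : HasDerivAt (fun r : ℝ => -3 * l * Real.exp (-3 * r))
      (9 * l * Real.exp (-3 * r)) r := by
    have : HasDerivAt (fun x => -3 * l * rexp (-3 * id x)) (-3 * l * (rexp (-3 * r) * (-3 * 1))) r := ((hasDerivAt_id r).const_mul (-3 : ℝ)).exp.const_mul (-3 * l)
    convert this using 1
    simp only [id_eq]
    ring
  exact h.deriv

/-- For `λ > 0` and `f₊(ρ) = 1 + λ e^{−3ρ}`, for every `ρ > 0`: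
(i) the exact identity
`f₊'' + 2 coth(ρ) f₊' − (3/4) f₊ (f₊⁴ − 1)
  = −6 λ (coth ρ − 1) e^{−3ρ} − (3/4)(10x² + 10x³ + 5x⁴ + x⁵)` with `x = λ e^{−3ρ}`;
(ii) this quantity is strictly negative. -/
theorem barrier_identity_upper (l : ℝ) (hl : 0 < l) (ρ : ℝ) (hρ : 0 < ρ) :
    let f : ℝ → ℝ := fun r => 1 + l * Real.exp (-3 * r)
    let x : ℝ := l * Real.exp (-3 * ρ)
    (deriv (deriv f) ρ + 2 * (Real.cosh ρ / Real.sinh ρ) * deriv f ρ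
          - (3 / 4) * f ρ * ((f ρ) ^ 4 - 1)
        = -6 * l * (Real.cosh ρ / Real.sinh ρ - 1) * Real.exp (-3 * ρ)
          - (3 / 4) * (10 * x ^ 2 + 10 * x ^ 3 + 5 * x ^ 4 + x ^ 5)) ∧
      deriv (deriv f) ρ + 2 * (Real.cosh ρ / Real.sinh ρ) * deriv f ρ
          - (3 / 4) * f ρ * ((f ρ) ^ 4 - 1) < 0 := by
  intro f x
  have hd : deriv f = fun r => -3 * l * Real.exp (-3 * r) := deriv_barrier l
  have hd2 : deriv (deriv f) ρ = 9 * l * Real.exp (-3 * ρ) := by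
    rw [hd]; rw [deriv2_barrier l]
  have hid : deriv (deriv f) ρ + 2 * (Real.cosh ρ / Real.sinh ρ) * deriv f ρ
          - (3 / 4) * f ρ * ((f ρ) ^ 4 - 1)
        = -6 * l * (Real.cosh ρ / Real.sinh ρ - 1) * Real.exp (-3 * ρ)
          - (3 / 4) * (10 * x ^ 2 + 10 * x ^ 3 + 5 * x ^ 4 + x ^ 5) := by
    rw [hd2, hd]
    show 9 * l * Real.exp (-3 * ρ) + 2 * (Real.cosh ρ / Real.sinh ρ) * (-3 * l * Real.exp (-3 * ρ))
        - (3 / 4) * (1 + l * Real.exp (-3 * ρ)) * ((1 + l * Real.exp (-3 * ρ)) ^ 4 - 1) = _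
    show _ = -6 * l * (Real.cosh ρ / Real.sinh ρ - 1) * Real.exp (-3 * ρ)
        - (3 / 4) * (10 * (l * Real.exp (-3 * ρ)) ^ 2 + 10 * (l * Real.exp (-3 * ρ)) ^ 3
          + 5 * (l * Real.exp (-3 * ρ)) ^ 4 + (l * Real.exp (-3 * ρ)) ^ 5)
    ring
  refine ⟨hid, ?_⟩
  rw [hid]
  have hx : 0 < x := mul_pos hl (Real.exp_pos _)
  have hs : 0 < Real.sinh ρ := Real.sinh_pos_iff.mpr hρ
  have hcs : Real.sinh ρ < Real.cosh ρ := Real.sinh_lt_cosh ρ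
  have hcoth : 1 < Real.cosh ρ / Real.sinh ρ := (one_lt_div hs).mpr hcs
  have h1 : -6 * l * (Real.cosh ρ / Real.sinh ρ - 1) * Real.exp (-3 * ρ) < 0 := by
    have h0 : 0 < Real.cosh ρ / Real.sinh ρ - 1 := by linarith
    have := mul_pos (mul_pos (mul_pos (by norm_num : (0:ℝ) < 6) hl) h0) (Real.exp_pos (-3 * ρ))
    linarith
  have h2 : 0 < (3 / 4 : ℝ) * (10 * x ^ 2 + 10 * x ^ 3 + 5 * x ^ 4 + x ^ 5) := by positivity
  linarith
end

section
/- Let λ > 0 and f₋(ρ) = 1 − λ e^{−3ρ}. For every ρ > 0 satisfying λ ≤ e^{ρ}, one has f₋''(ρ) + 2 (cosh ρ / sinh ρ) f₋'(ρ) − (3/4) f₋(ρ) ((f₋(ρ))⁴ − 1) > 0. -/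
open Real

/-- For `λ > 0`, `f₋(ρ) = 1 − λ e^{−3ρ}`, and every `ρ > 0` with `λ ≤ e^ρ`, the
lower barrier is a strict subsolution:
`f₋'' + 2 coth(ρ) f₋' − (3/4) f₋ (f₋⁴ − 1) > 0`. -/
theorem barrier_subsolution (l : ℝ) (hl : 0 < l) (ρ : ℝ) (hρ : 0 < ρ)
    (hlρ : l ≤ Real.exp ρ) :
    let f : ℝ → ℝ := fun r => 1 - l * Real.exp (-3 * r)
    deriv (deriv f) ρ + 2 * (Real.cosh ρ / Real.sinh ρ) * deriv f ρ
        - (3 / 4) * f ρ * ((f ρ) ^ 4 - 1) > 0 := by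
  intro f
  have hf' : deriv f = fun r => 3 * l * Real.exp (-3 * r) := by
    funext r
    have h1 : HasDerivAt (fun r : ℝ => -3 * r) (-3) r := by
      simpa using (hasDerivAt_id r).const_mul (-3 : ℝ)
    have h2 := h1.exp
    have h3 := (h2.const_mul l).const_sub 1
    have : HasDerivAt f (3 * l * Real.exp (-3 * r)) r := by
      exact h3.congr_deriv (by ring)
    exact this.deriv
  have hf'' : deriv (deriv f) ρ = -9 * l * Real.exp (-3 * ρ) := by
    rw [hf']
    have h1 : HasDerivAt (fun r : ℝ => -3 * r) (-3) ρ := by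
      simpa using (hasDerivAt_id ρ).const_mul (-3 : ℝ)
    have h2 := (h1.exp).const_mul (3 * l)
    have : HasDerivAt (fun r => 3 * l * Real.exp (-3 * r))
        (-9 * l * Real.exp (-3 * ρ)) ρ := by
      exact h2.congr_deriv (by ring)
    exact this.deriv
  rw [hf'', hf']
  simp only [f]
  set x := l * Real.exp (-3 * ρ) with hx_def
  set c := Real.cosh ρ / Real.sinh ρ with hc_def
  have hxpos : 0 < x := mul_pos hl (Real.exp_pos _)
  have he2 : (0:ℝ) < Real.exp (-2 * ρ) := Real.exp_pos _
  have hxe : x ≤ Real.exp (-2 * ρ) := by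
    have : l * Real.exp (-3 * ρ) ≤ Real.exp ρ * Real.exp (-3 * ρ) :=
      mul_le_mul_of_nonneg_right hlρ (Real.exp_pos _).le
    calc x ≤ Real.exp ρ * Real.exp (-3 * ρ) := this
      _ = Real.exp (-2 * ρ) := by rw [← Real.exp_add]; ring_nf
  have he1 : Real.exp (-2 * ρ) < 1 := by
    rw [Real.exp_lt_one_iff]; linarith
  have hx1 : x < 1 := lt_of_le_of_lt hxe he1
  -- coth bound
  have hs : 0 < Real.sinh ρ := Real.sinh_pos_iff.mpr hρ
  have hsu : Real.sinh ρ < Real.exp ρ / 2 := by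
    rw [Real.sinh_eq]
    have := Real.exp_pos (-ρ)
    linarith
  have hc : 1 + 2 * Real.exp (-2 * ρ) < c := by
    have hcs : Real.cosh ρ - Real.sinh ρ = Real.exp (-ρ) := Real.cosh_sub_sinh ρ
    have h1 : c = 1 + (Real.cosh ρ - Real.sinh ρ) / Real.sinh ρ := by
      field_simp [hc_def]
      rw [hc_def]; field_simp; ring
    rw [h1, hcs]
    have h2 : 2 * Real.exp (-2 * ρ) < Real.exp (-ρ) / Real.sinh ρ := by
      rw [lt_div_iff₀ hs]
      have hexp : Real.exp (-2 * ρ) * Real.exp ρ = Real.exp (-ρ) := by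
        rw [← Real.exp_add]; ring_nf
      nlinarith [Real.exp_pos (-2 * ρ)]
    linarith
  -- key inequalities
  have h1 : 12 * x ^ 2 < 6 * x * (c - 1) := by
    have : 2 * Real.exp (-2 * ρ) < c - 1 := by linarith
    nlinarith
  have h2 : (3 / 4) * x ^ 2 * (10 - 10 * x + 5 * x ^ 2 - x ^ 3) ≤ (15 / 2) * x ^ 2 := by
    nlinarith [pow_pos hxpos 3, sq_nonneg (x - 5 / 2)]
  have key : -9 * x + 2 * c * (3 * x)
      - 3 / 4 * (1 - x) * ((1 - x) ^ 4 - 1)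
      = 6 * x * (c - 1) - (3 / 4) * x ^ 2 * (10 - 10 * x + 5 * x ^ 2 - x ^ 3) := by
    ring
  have goal : -9 * x + 2 * c * (3 * x) - 3 / 4 * (1 - x) * ((1 - x) ^ 4 - 1) > 0 := by
    rw [key]; nlinarith
  have e1 : -9 * l * Real.exp (-3 * ρ) = -9 * x := by rw [hx_def]; ring
  have e2 : (3:ℝ) * l * Real.exp (-3 * ρ) = 3 * x := by rw [hx_def]; ring
  rw [e1, e2]
  linarith [goal]
end

section
/- For every λ > 0 there exists ρ₀ > 0 such that for all ρ ≥ ρ₀, f₋''(ρ) + 2 (cosh ρ / sinh ρ) f₋'(ρ) − (3/4) f₋(ρ) ((f₋(ρ))⁴ − 1) > 0, where f₋(ρ) = 1 − λ e^{−3ρ}. -/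
open Real

lemma barrier_deriv1 (l : ℝ) :
    deriv (fun r => 1 - l * Real.exp (-3 * r)) = fun r => 3 * l * Real.exp (-3 * r) := by
  funext r
  have h : HasDerivAt (fun r : ℝ => 1 - l * Real.exp (-3 * r)) (3 * l * Real.exp (-3 * r)) r := by
    have h1 : HasDerivAt (fun r : ℝ => -3 * r) (-3) r := by
      simpa using (hasDerivAt_id r).const_mul (-3)
    have h2 := (h1.exp).const_mul l
    have h3 := (hasDerivAt_const r (1 : ℝ)).sub h2
    exact h3.congr_deriv (by ring)
  exact h.deriv

/-- For every `λ > 0` there exists `ρ₀ > 0` such that for all `ρ ≥ ρ₀`,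
the lower barrier `f₋(ρ) = 1 − λ e^{−3ρ}` satisfies
`f₋'' + 2 coth(ρ) f₋' − (3/4) f₋ (f₋⁴ − 1) > 0`. -/
theorem barrier_subsolution_eventually (l : ℝ) (hl : 0 < l) :
    ∃ ρ₀ : ℝ, 0 < ρ₀ ∧ ∀ ρ : ℝ, ρ₀ ≤ ρ →
      deriv (deriv (fun r => 1 - l * Real.exp (-3 * r))) ρ
        + 2 * (Real.cosh ρ / Real.sinh ρ)
            * deriv (fun r => 1 - l * Real.exp (-3 * r)) ρ
        - (3 / 4) * (1 - l * Real.exp (-3 * ρ))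
            * ((1 - l * Real.exp (-3 * ρ)) ^ 4 - 1) > 0 := by
  refine ⟨max 1 (Real.log l + 1), lt_of_lt_of_le one_pos (le_max_left _ _), fun ρ hρ => ?_⟩
  have hρ1 : (1 : ℝ) ≤ ρ := le_trans (le_max_left _ _) hρ
  have hρ0 : 0 < ρ := lt_of_lt_of_le one_pos hρ1
  have hρl : Real.log l + 1 ≤ ρ := le_trans (le_max_right _ _) hρ
  have hexpl : l < Real.exp ρ := by
    calc l = Real.exp (Real.log l) := (Real.exp_log hl).symm
    _ < Real.exp ρ := Real.exp_lt_exp.mpr (by linarith)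
  rw [barrier_deriv1]
  have hd2 : deriv (fun r => 3 * l * Real.exp (-3 * r)) ρ = -9 * l * Real.exp (-3 * ρ) := by
    have h1 : HasDerivAt (fun r : ℝ => -3 * r) (-3) ρ := by
      simpa using (hasDerivAt_id ρ).const_mul (-3)
    have h2 := (h1.exp).const_mul (3 * l)
    have : HasDerivAt (fun r : ℝ => 3 * l * Real.exp (-3 * r)) (-9 * l * Real.exp (-3 * ρ)) ρ := by
      exact h2.congr_deriv (by ring)
    exact this.deriv
  rw [hd2]
  set u := l * Real.exp (-3 * ρ) with hu
  have hupos : 0 < u := mul_pos hl (Real.exp_pos _)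
  have hs : 0 < Real.sinh ρ := Real.sinh_pos_iff.mpr hρ0
  have hcs : Real.cosh ρ - Real.sinh ρ = Real.exp (-ρ) := by
    rw [Real.cosh_eq, Real.sinh_eq]; ring
  have hslt : Real.sinh ρ < Real.exp ρ / 2 := by
    rw [Real.sinh_eq]
    have := Real.exp_pos (-ρ)
    linarith
  -- u < exp(-2ρ)
  have hue : u < Real.exp (-(2*ρ)) := by
    rw [hu]
    have : Real.exp (-(2*ρ)) = Real.exp ρ * Real.exp (-3*ρ) := by
      rw [← Real.exp_add]; ring_nf
    rw [this]
    exact mul_lt_mul_of_pos_right hexpl (Real.exp_pos _)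
  have hu1 : u < 1 := by
    have : Real.exp (-(2*ρ)) < 1 := Real.exp_lt_one_iff.mpr (by linarith)
    linarith
  -- key: 6u * (cosh/sinh - 1) = 6u * exp(-ρ)/sinh ρ > 12 u^2
  have hkey : 2 * (Real.cosh ρ / Real.sinh ρ) * (3 * u) > 6 * u + 12 * u ^ 2 := by
    have h1 : Real.cosh ρ / Real.sinh ρ = 1 + Real.exp (-ρ) / Real.sinh ρ := by
      field_simp
      linarith [hcs]
    rw [h1]
    have h2 : Real.exp (-ρ) / Real.sinh ρ > 2 * u := by
      have h3 : Real.exp (-ρ) / Real.sinh ρ > Real.exp (-ρ) / (Real.exp ρ / 2) :=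
        div_lt_div_of_pos_left (Real.exp_pos _) hs hslt
      have h4 : Real.exp (-ρ) / (Real.exp ρ / 2) = 2 * Real.exp (-(2*ρ)) := by
        have he : Real.exp (-(2*ρ)) * Real.exp ρ = Real.exp (-ρ) := by
          rw [← Real.exp_add]; ring_nf
        field_simp
        rw [mul_comm ρ 2]
        linarith [he]
      nlinarith [hue]
    nlinarith
  nlinarith [sq_nonneg u, mul_pos hupos hupos, sq_nonneg (u*u), mul_pos (mul_pos hupos hupos) hupos]
end
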